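/- In T_X = ω × L_X (lexicographic order), a point has a set of strict predecessors of cofinality ℵ₁ if and only if it is of the form (n, (0,0)) with n ≥ 1. -/

import Mathlib

open Ordinal Cardinal

noncomputable def omega1' : Ordinal := (Cardinal.aleph 1).ord

lemma omega1'_pos : (0 : Ordinal) < omega1' := by
  simpa [omega1'] using Ordinal.omega_pos 1

/-- The underlying set of the linear order `L_X`. -/
def LX (X : Set Ordinal) : Type 1 :=
  {p : {o : Ordinal // o < omega1'} × ℕ // p.1.1 ∉ X → p.2 = 0}

/-- The order on `L_X`. -/
def LXlt (X : Set Ordinal) : LX X → LX X → Prop := fun p q =>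
  p.1.1.1 < q.1.1.1 ∨
  (p.1.1 = q.1.1 ∧ p.1.2 = 0 ∧ 0 < q.1.2) ∨
  (p.1.1 = q.1.1 ∧ q.1.2 < p.1.2 ∧ 0 < q.1.2)

/-- `T_X = ω × L_X`, ordered lexicographically. -/
def TX (X : Set Ordinal) : Type 1 := ℕ × LX X

/-- The lexicographic order on `T_X`. -/
def TXlt (X : Set Ordinal) : TX X → TX X → Prop := fun p q =>
  p.1 < q.1 ∨ (p.1 = q.1 ∧ LXlt X p.2 q.2)

/-- The bottom point `(0,0)` of `L_X`. -/
def LXzero (X : Set Ordinal) : LX X := ⟨(⟨0, omega1'_pos⟩, 0), fun _ => rfl⟩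

lemma omega1'_isLimit : Order.IsSuccLimit omega1' := Cardinal.isSuccLimit_ord (Cardinal.aleph0_le_aleph 1)

lemma not_LXlt_zero (X : Set Ordinal) (p : LX X) : ¬ LXlt X p (LXzero X) := by
  rintro (h | ⟨_, _, h⟩ | ⟨_, _, h⟩)
  · exact not_lt_of_ge zero_le h
  · exact lt_irrefl 0 h
  · exact lt_irrefl 0 h

lemma TXlt_zero_iff (X : Set Ordinal) (n : ℕ) (s : TX X) :
    TXlt X s (n, LXzero X) ↔ s.1 < n := by
  constructor
  · rintro (h | ⟨h1, h2⟩)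
    · exact h
    · exact absurd h2 (not_LXlt_zero X s.2)
  · exact fun h => Or.inl h

/-- Lower bound: any cofinal subset of the predecessors of `(n, (0,0))`, `n ≥ 1`,
has cardinality at least `ℵ₁`. -/
lemma aleph_one_le_of_cofinal (X : Set Ordinal) (n : ℕ) (hn : 1 ≤ n) (C : Set (TX X))
    (hC : C ⊆ {s | TXlt X s (n, LXzero X)})
    (hcof : ∀ s, TXlt X s (n, LXzero X) → ∃ x ∈ C, s = x ∨ TXlt X s x) :
    Cardinal.aleph 1 ≤ Cardinal.mk C := by
  by_contra h
  push_neg at h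
  have hcount : C.Countable := (Cardinal.countable_iff_lt_aleph_one C).2 h
  have : Countable C := hcount.to_subtype
  have hne : Nonempty C := by
    obtain ⟨x, hx, -⟩ := hcof (n - 1, LXzero X) (Or.inl (by omega))
    exact ⟨⟨x, hx⟩⟩
  obtain ⟨g, hg⟩ := exists_surjective_nat C
  set F : ℕ → Ordinal := fun k => ((g k : TX X).2.1.1.1) with hF
  have hFlt : ∀ k, F k < omega1' := fun k => ((g k : TX X)).2.1.1.2
  have hsup : iSup F < omega1' := by
    refine Ordinal.iSup_lt_ord ?_ hFlt
    rw [show omega1'.cof = ((Cardinal.aleph 1).ord).cof from rfl,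
      Cardinal.isRegular_aleph_one.cof_eq]
    exact Cardinal.mk_le_aleph0.trans_lt Cardinal.aleph0_lt_aleph_one
  have hsucc : Order.succ (iSup F) < omega1' := omega1'_isLimit.succ_lt hsup
  obtain ⟨x, hxC, hx⟩ :=
    hcof (n - 1, ⟨(⟨Order.succ (iSup F), hsucc⟩, 0), fun _ => rfl⟩) (Or.inl (by omega))
  obtain ⟨k, hk⟩ := hg ⟨x, hxC⟩
  have hx1 : x.1 < n := (TXlt_zero_iff X n x).1 (hC hxC)
  have hcoord : Order.succ (iSup F) ≤ x.2.1.1.1 := by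
    rcases hx with heq | h | ⟨h1, h2⟩
    · rw [← heq]
    · omega
    · rcases h2 with h | ⟨he, _⟩ | ⟨he, _⟩
      · exact h.le
      · exact (congrArg Subtype.val he).le
      · exact (congrArg Subtype.val he).le
  have hle : F k ≤ iSup F := Ordinal.le_iSup F k
  have hFk : F k = x.2.1.1.1 := by rw [hF]; simp [hk]
  rw [hFk] at hle
  exact absurd (hcoord.trans hle) (Order.lt_succ (iSup F)).not_ge

/-- Upper bound: the predecessors of `(n, (0,0))`, `n ≥ 1`, have a cofinal subset of
cardinality `ℵ₁`. -/
lemma aleph_one_mem (X : Set Ordinal) (n : ℕ) (hn : 1 ≤ n) :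
    ∃ C ⊆ {s | TXlt X s (n, LXzero X)}, Cardinal.mk C = Cardinal.aleph 1 ∧
      ∀ s, TXlt X s (n, LXzero X) → ∃ x ∈ C, s = x ∨ TXlt X s x := by
  set f : {o : Ordinal // o < omega1'} → TX X :=
    fun o => ((n - 1 : ℕ), (⟨(o, 0), fun _ => rfl⟩ : LX X)) with hf
  have hinj : Function.Injective f := by
    intro a b h
    exact congrArg (fun p : TX X => p.2.1.1) h
  refine ⟨Set.range f, ?_, ?_, ?_⟩
  · rintro s ⟨o, rfl⟩
    exact Or.inl (Nat.sub_lt (by omega) Nat.one_pos)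
  · rw [Cardinal.mk_range_eq f hinj]
    have : #{o : Ordinal // o < omega1'} = #(Set.Iio omega1') := rfl
    rw [this, Ordinal.mk_Iio_ordinal]
    rw [show omega1'.card = Cardinal.aleph 1 from Cardinal.card_ord _]
    rw [Cardinal.lift_aleph, Ordinal.lift_one]
  · intro s hs
    have hs1 : s.1 < n := (TXlt_zero_iff X n s).1 hs
    have hsucc : Order.succ s.2.1.1.1 < omega1' := omega1'_isLimit.succ_lt s.2.1.1.2
    refine ⟨f ⟨Order.succ s.2.1.1.1, hsucc⟩, Set.mem_range_self _, Or.inr ?_⟩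
    rcases Nat.lt_or_ge s.1 (n - 1) with h | h
    · exact Or.inl h
    · have h1 : s.1 = n - 1 := by omega
      exact Or.inr ⟨h1, Or.inl (Order.lt_succ _)⟩

/-- In `T_X`, a point has a set of strict predecessors of cofinality `ℵ₁` iff
it is of the form `(n, (0,0))` with `n ≥ 1`. -/
theorem stmt10 (X : Set Ordinal)
    (hX : ∀ o ∈ X, o < omega1' ∧ Order.IsSuccLimit o) (t : TX X) :
    sInf {c : Cardinal |
        ∃ C ⊆ {s | TXlt X s t}, Cardinal.mk C = c ∧
          ∀ s, TXlt X s t → ∃ x ∈ C, s = x ∨ TXlt X s x} = Cardinal.aleph 1 ↔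
      ∃ n : ℕ, 1 ≤ n ∧ t = (n, LXzero X) := by
  constructor
  · intro hinf
    by_contra hne
    suffices hs : ∃ c ∈ {c : Cardinal |
        ∃ C ⊆ {s | TXlt X s t}, Cardinal.mk C = c ∧
          ∀ s, TXlt X s t → ∃ x ∈ C, s = x ∨ TXlt X s x}, c < Cardinal.aleph 1 by
      obtain ⟨c, hc, hlt⟩ := hs
      have h1 := csInf_le' hc
      rw [hinf] at h1
      exact absurd h1 hlt.not_ge
    obtain ⟨n, l⟩ := t
    by_cases hl : l = LXzero X
    · -- then n = 0, no predecessors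
      have hn0 : n = 0 := by
        by_contra hn
        exact hne ⟨n, by omega, by rw [hl]⟩
      subst hn0; subst hl
      refine ⟨0, ⟨∅, by simp, by simp, fun s hs => ?_⟩, ?_⟩
      · exact absurd ((TXlt_zero_iff X 0 s).1 hs) (by omega)
      · exact Cardinal.aleph_pos 1
    · obtain ⟨⟨⟨α, hα⟩, m⟩, hm⟩ := l
      by_cases hm0 : m = 0
      · -- α > 0, m = 0
        subst hm0
        have hα0 : α ≠ 0 := by
          intro h0
          subst h0
          exact hl rfl
        have hαpos : (0 : Ordinal) < α := pos_iff_ne_zero.2 hα0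
        -- countable cofinal set
        set D := {β : Ordinal // β < α} ⊕ {p : {β : Ordinal // β < α} // p.1 ∈ X} with hD
        set f : D → TX X := fun d =>
          match d with
          | Sum.inl β => (n, ⟨(⟨β.1, β.2.trans hα⟩, 0), fun _ => rfl⟩)
          | Sum.inr p => (n, ⟨(⟨p.1.1, p.1.2.trans hα⟩, 1), fun h => (h p.2).elim⟩)
          with hfd
        have hcard : #{β : Ordinal // β < α} ≤ ℵ₀ := by
          have : #{β : Ordinal // β < α} = #(Set.Iio α) := rfl
          rw [this, Ordinal.mk_Iio_ordinal]
          have h1 : α.card < Cardinal.aleph 1 := Cardinal.lt_ord.1 hα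
          have h2 : α.card ≤ ℵ₀ := Order.lt_succ_iff.1 (by rwa [Cardinal.succ_aleph0])
          calc Cardinal.lift.{1} α.card ≤ Cardinal.lift.{1} ℵ₀ := Cardinal.lift_le.2 h2
            _ = ℵ₀ := Cardinal.lift_aleph0
        have hc1 : Countable {β : Ordinal // β < α} := Cardinal.mk_le_aleph0_iff.1 hcard
        have hcD : Countable D := by
          have : Countable {p : {β : Ordinal // β < α} // p.1 ∈ X} := Subtype.countable
          exact instCountableSum
        have hcount : (Set.range f).Countable := Set.countable_range f
        refine ⟨#(Set.range f), ⟨Set.range f, ?_, rfl, ?_⟩, ?_⟩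
        · rintro s ⟨d, rfl⟩
          match d with
          | Sum.inl β => exact Or.inr ⟨rfl, Or.inl β.2⟩
          | Sum.inr p => exact Or.inr ⟨rfl, Or.inl p.1.2⟩
        · rintro ⟨s1, ⟨⟨⟨β, hβ⟩, k⟩, hk⟩⟩ hs
          rcases hs with h | ⟨h1, h2⟩
          · exact ⟨f (Sum.inl ⟨0, hαpos⟩), ⟨Sum.inl ⟨0, hαpos⟩, rfl⟩, Or.inr (Or.inl h)⟩
          · simp only at h1
            subst h1
            have hβα : β < α := by
              rcases h2 with h | ⟨_, _, h⟩ | ⟨_, _, h⟩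
              · exact h
              · exact absurd h (lt_irrefl 0)
              · exact absurd h (lt_irrefl 0)
            rcases Nat.eq_zero_or_pos k with hk0 | hkpos
            · subst hk0
              exact ⟨f (Sum.inl ⟨β, hβα⟩), ⟨Sum.inl ⟨β, hβα⟩, rfl⟩, Or.inl rfl⟩
            · have hβX : β ∈ X := by
                by_contra hc
                exact absurd (hk hc) (by omega)
              refine ⟨f (Sum.inr ⟨⟨β, hβα⟩, hβX⟩), ⟨Sum.inr ⟨⟨β, hβα⟩, hβX⟩, rfl⟩, ?_⟩
              rcases Nat.lt_or_ge 1 k with h1k | h1k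
              · exact Or.inr (Or.inr ⟨rfl, Or.inr (Or.inr ⟨rfl, h1k, Nat.one_pos⟩)⟩)
              · have : k = 1 := by omega
                subst this
                exact Or.inl rfl
        · exact (Cardinal.countable_iff_lt_aleph_one _).1 hcount
      · -- m > 0 : the predecessors have a maximum
        have hαX : α ∈ X := by
          by_contra hc
          exact hm0 (hm hc)
        set x₀ : TX X := (n, ⟨(⟨α, hα⟩, m + 1), fun h => (h hαX).elim⟩) with hx₀
        refine ⟨1, ⟨{x₀}, ?_, Cardinal.mk_singleton x₀, ?_⟩, ?_⟩
        · rintro s rfl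
          exact Or.inr ⟨rfl, Or.inr (Or.inr ⟨rfl, Nat.lt_succ_self m, Nat.pos_of_ne_zero hm0⟩)⟩
        · rintro ⟨s1, ⟨⟨⟨β, hβ⟩, k⟩, hk⟩⟩ hs
          refine ⟨x₀, rfl, ?_⟩
          rcases hs with h | ⟨h1, h2⟩
          · exact Or.inr (Or.inl h)
          · simp only at h1
            subst h1
            rcases h2 with h | ⟨he, hk0, _⟩ | ⟨he, hmk, _⟩
            · exact Or.inr (Or.inr ⟨rfl, Or.inl h⟩)
            · exact Or.inr (Or.inr ⟨rfl, Or.inr (Or.inl ⟨he, hk0, Nat.succ_pos m⟩)⟩)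
            · -- m < k
              have hmk' : m < k := hmk
              rcases Nat.lt_or_ge (m + 1) k with h1k | h1k
              · exact Or.inr (Or.inr ⟨rfl, Or.inr (Or.inr ⟨he, h1k, Nat.succ_pos m⟩)⟩)
              · have hk1 : k = m + 1 := by omega
                subst hk1
                refine Or.inl (Prod.ext rfl (Subtype.ext (Prod.ext ?_ rfl)))
                exact he
        · exact Cardinal.one_lt_aleph0.trans Cardinal.aleph0_lt_aleph_one
  · rintro ⟨n, hn, rfl⟩
    apply le_antisymm
    · exact csInf_le' (aleph_one_mem X n hn)
    · refine le_csInf ?_ ?_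
      · obtain ⟨C, h1, h2, h3⟩ := aleph_one_mem X n hn
        exact ⟨_, C, h1, h2, h3⟩
      · rintro b ⟨C, hsub, rfl, hcof⟩
        exact aleph_one_le_of_cofinal X n hn C hsub hcof
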